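/- Let D and D' be closed convex subsets of S^d (the sphere of rays in ℝ^{d+1}) with non-empty interior, intersecting along a set F = D ∩ D' which is a codimension-1 face of both. Then D ∪ D' is convex if and only if every point of the relative boundary ∂F is contained in the boundary of a closed half-space of S^d that contains D ∪ D'. -/

import Mathlib

open Set Filter Topology

set_option maxHeartbeats 1600000 in
/-- Let `D, D'` be closed convex subsets of `S^d` with nonempty interior
(encoded by closed convex cones `C, D ⊆ ℝ^{d+1}` with nonempty interior), meeting along
`F = D ∩ D'`, a codimension-1 face of both (a face is an extreme subset; codimension 1
means the span of `F` has dimension `d`, i.e. projective dimension `d − 1`).  Then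
`D ∪ D'` is convex if and only if every point of the relative boundary `∂F` lies in the
boundary of a closed half-space of `S^d` containing `D ∪ D'`. -/
theorem union_convex_iff_halfspaces (d : ℕ) (C D : Set (Fin (d + 1) → ℝ))
    (hCcl : IsClosed C) (hDcl : IsClosed D)
    (hCconv : Convex ℝ C) (hDconv : Convex ℝ D)
    (hCcone : ∀ v ∈ C, ∀ t : ℝ, 0 < t → t • v ∈ C)
    (hDcone : ∀ v ∈ D, ∀ t : ℝ, 0 < t → t • v ∈ D)
    (hCint : (interior C).Nonempty) (hDint : (interior D).Nonempty)
    (hfaceC : IsExtreme ℝ C (C ∩ D)) (hfaceD : IsExtreme ℝ D (C ∩ D))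
    (hcodim : Module.finrank ℝ (Submodule.span ℝ (C ∩ D)) = d) :
    Convex ℝ (C ∪ D) ↔
      ∀ x ∈ intrinsicFrontier ℝ (C ∩ D),
        ∃ f : (Fin (d + 1) → ℝ) →ₗ[ℝ] ℝ, f ≠ 0 ∧ f x = 0 ∧
          ∀ y ∈ C ∪ D, 0 ≤ f y := by
  classical
  obtain ⟨c₀, hc₀⟩ := hCint
  obtain ⟨d₀, hd₀⟩ := hDint
  have hFconv : Convex ℝ (C ∩ D) := hCconv.inter hDconv
  have hFcl : IsClosed (C ∩ D) := hCcl.inter hDcl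
  have zero_mem : ∀ (S : Set (Fin (d+1) → ℝ)), IsClosed S → S.Nonempty →
      (∀ v ∈ S, ∀ t : ℝ, 0 < t → t • v ∈ S) → (0 : Fin (d+1) → ℝ) ∈ S := by
    rintro S hScl ⟨c, hc⟩ hScone
    have ht : Tendsto (fun n : ℕ => (1/((n:ℝ)+1)) • c) atTop (𝓝 ((0:ℝ) • c)) :=
      tendsto_one_div_add_atTop_nhds_zero_nat.smul_const c
    rw [zero_smul] at ht
    exact hScl.mem_of_tendsto ht (Eventually.of_forall fun n =>
      hScone c hc _ (by positivity))
  have h0C : (0 : Fin (d+1) → ℝ) ∈ C :=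
    zero_mem C hCcl ⟨c₀, interior_subset hc₀⟩ hCcone
  have h0D : (0 : Fin (d+1) → ℝ) ∈ D :=
    zero_mem D hDcl ⟨d₀, interior_subset hd₀⟩ hDcone
  have h0F : (0 : Fin (d+1) → ℝ) ∈ C ∩ D := ⟨h0C, h0D⟩
  set V : Submodule ℝ (Fin (d+1) → ℝ) := Submodule.span ℝ (C ∩ D) with hVdef
  -- affine span = linear span
  have hAV : (affineSpan ℝ (C ∩ D) : Set (Fin (d+1) → ℝ)) = (V : Set (Fin (d+1) → ℝ)) := by
    rw [hVdef, ← affineSpan_insert_zero, Set.insert_eq_self.2 h0F]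
  have hFV : C ∩ D ⊆ (V : Set (Fin (d+1) → ℝ)) := Submodule.subset_span
  -- the functional φ with kernel V
  have hfinE : Module.finrank ℝ (Fin (d+1) → ℝ) = d + 1 := Module.finrank_fin_fun ℝ
  have hVne : V ≠ ⊤ := by
    intro h
    rw [h, finrank_top, hfinE] at hcodim
    omega
  obtain ⟨φ, hφne, hφmap⟩ :=
    Submodule.exists_dual_map_eq_bot_of_lt_top (p := V) (lt_top_iff_ne_top.2 hVne) inferInstance
  have hVker : V ≤ LinearMap.ker φ := by
    intro v hv
    have h1 : φ v ∈ V.map φ := Submodule.mem_map_of_mem hv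
    rw [hφmap, Submodule.mem_bot] at h1
    exact LinearMap.mem_ker.2 h1
  obtain ⟨w₀, hw₀⟩ : ∃ x, φ x ≠ 0 := by
    by_contra h
    push_neg at h
    exact hφne (LinearMap.ext fun x => h x)
  have hrange : LinearMap.range φ = ⊤ := by
    rw [LinearMap.range_eq_top]
    intro r
    exact ⟨(r / φ w₀) • w₀, by simp [div_mul_cancel₀ r hw₀]⟩
  have hkerrank : Module.finrank ℝ (LinearMap.ker φ) = d := by
    have h1 := LinearMap.finrank_range_add_finrank_ker φ
    rw [hrange, finrank_top, hfinE, Module.finrank_self] at h1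
    omega
  have hkerV : LinearMap.ker φ = V :=
    (Submodule.eq_of_le_of_finrank_eq hVker (by rw [hkerrank, hcodim])).symm
  have hmemV : ∀ z : Fin (d+1) → ℝ, z ∈ V ↔ φ z = 0 := by
    intro z; rw [← hkerV]; exact LinearMap.mem_ker
  set e : Fin (d+1) → ℝ := (φ w₀)⁻¹ • w₀ with hedef
  have hφe : φ e = 1 := by
    rw [hedef, map_smul, smul_eq_mul, inv_mul_cancel₀ hw₀]
  -- intrinsic interior point with its ball
  obtain ⟨p₀', hp₀'⟩ := Set.Nonempty.intrinsicInterior hFconv ⟨0, h0F⟩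
  obtain ⟨p', hp'int, hp'eq⟩ := hp₀'
  have hp'F : (p' : Fin (d+1) → ℝ) ∈ C ∩ D := Set.mem_preimage.mp (interior_subset hp'int)
  rw [mem_interior_iff_mem_nhds, Metric.mem_nhds_iff] at hp'int
  obtain ⟨ε, hε, hball⟩ := hp'int
  set P₀ : Fin (d+1) → ℝ := (p' : Fin (d+1) → ℝ) with hP₀def
  have hP₀V : P₀ ∈ V := hFV hp'F
  have hballF : ∀ q : Fin (d+1) → ℝ, q ∈ V → dist q P₀ < ε → q ∈ C ∩ D := by
    intro q hqV hqd
    have hqA : q ∈ affineSpan ℝ (C ∩ D) := by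
      have h1 : q ∈ (affineSpan ℝ (C ∩ D) : Set (Fin (d+1) → ℝ)) := by rw [hAV]; exact hqV
      exact h1
    exact hball (show (⟨q, hqA⟩ : affineSpan ℝ (C ∩ D)) ∈ Metric.ball p' ε by
      rw [Metric.mem_ball, Subtype.dist_eq]; exact hqd)
  have memF : ∀ (S : Set (Fin (d+1) → ℝ)), IsExtreme ℝ S (C ∩ D) →
      ∀ c ∈ S, c ∈ V → c ∈ C ∩ D := by
    intro S hface c hcS hcV
    by_cases hc : c = P₀
    · rw [hc]; exact hp'F
    · have hnorm : 0 < ‖P₀ - c‖ := by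
        rw [norm_pos_iff]; exact sub_ne_zero.2 (Ne.symm hc)
      set δ : ℝ := ε / (2 * ‖P₀ - c‖) with hδdef
      have hδ : 0 < δ := by positivity
      set s : Fin (d+1) → ℝ := P₀ + δ • (P₀ - c) with hsdef
      have hsV : s ∈ V := V.add_mem hP₀V (V.smul_mem _ (V.sub_mem hP₀V hcV))
      have hsF : s ∈ C ∩ D := by
        apply hballF s hsV
        rw [hsdef, dist_eq_norm, add_sub_cancel_left, norm_smul, Real.norm_eq_abs,
          abs_of_pos hδ]
        have h1 : δ * ‖P₀ - c‖ = ε / 2 := by rw [hδdef]; field_simp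
        rw [h1]; linarith
      have h1δ : (1:ℝ) + δ ≠ 0 := by positivity
      have hseg : P₀ ∈ openSegment ℝ c s := by
        refine ⟨δ/(1+δ), 1/(1+δ), by positivity, by positivity, by field_simp; ring, ?_⟩
        rw [hsdef]; match_scalars <;> (field_simp; try ring)
      exact (hface.2 hcS (hface.1 hsF) hp'F hseg)
  have oneside : ∀ (S : Set (Fin (d+1) → ℝ)), Convex ℝ S → IsExtreme ℝ S (C ∩ D) →
      (∀ y ∈ S, 0 ≤ φ y) ∨ (∀ y ∈ S, φ y ≤ 0) := by
    intro S hSconv hSface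
    by_contra h
    push_neg at h
    obtain ⟨⟨a, haS, ha⟩, ⟨b, hbS, hb⟩⟩ := h
    have hΔ : 0 < φ b - φ a := by linarith
    set lam : ℝ := φ b / (φ b - φ a) with hlam
    have hlam0 : 0 < lam := by positivity
    have hmu0 : 0 < 1 - lam := by
      have h2 : 1 - lam = -φ a / (φ b - φ a) := by rw [hlam]; field_simp; ring
      rw [h2]; exact div_pos (by linarith) hΔ
    set c : Fin (d+1) → ℝ := lam • a + (1 - lam) • b with hcdef
    have hcS : c ∈ S := hSconv haS hbS hlam0.le hmu0.le (by ring)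
    have hcV : c ∈ V := by
      rw [hmemV]
      simp only [hcdef, map_add, map_smul, smul_eq_mul]
      rw [hlam]
      field_simp
      ring
    have hcF : c ∈ C ∩ D := memF S hSface c hcS hcV
    have hseg : c ∈ openSegment ℝ a b := ⟨lam, 1 - lam, hlam0, hmu0, by ring, rfl⟩
    have haF : a ∈ C ∩ D := (hSface.2 haS hbS hcF hseg)
    have : φ a = 0 := (hmemV a).1 (hFV haF)
    linarith
  have intpos : ∀ (ψ : (Fin (d+1) → ℝ) →ₗ[ℝ] ℝ) (eψ : Fin (d+1) → ℝ), ψ eψ = 1 →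
      ∀ (S : Set (Fin (d+1) → ℝ)), (∀ y ∈ S, 0 ≤ ψ y) → ∀ z ∈ interior S, 0 < ψ z := by
    intro ψ eψ heψ S hS z hz
    rcases (hS z (interior_subset hz)).lt_or_eq with h | h
    · exact h
    · exfalso
      rw [mem_interior_iff_mem_nhds, Metric.mem_nhds_iff] at hz
      obtain ⟨ρ, hρ, hballS⟩ := hz
      have heψn : 0 < ‖eψ‖ := by
        rw [norm_pos_iff]
        rintro rfl
        rw [map_zero] at heψ
        exact one_ne_zero heψ.symm
      set t : ℝ := ρ / (2 * ‖eψ‖) with htdef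
      have ht : 0 < t := by positivity
      have hmem : z - t • eψ ∈ S := by
        apply hballS
        rw [Metric.mem_ball, dist_eq_norm, sub_sub_cancel_left, norm_neg, norm_smul,
          Real.norm_eq_abs, abs_of_pos ht]
        have h1 : t * ‖eψ‖ = ρ / 2 := by rw [htdef]; field_simp
        rw [h1]; linarith
      have h2 := hS _ hmem
      rw [map_sub, map_smul, heψ, smul_eq_mul, mul_one, ← h] at h2
      linarith
  have nosame : ∀ (ψ : (Fin (d+1) → ℝ) →ₗ[ℝ] ℝ) (eψ : Fin (d+1) → ℝ), ψ eψ = 1 →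
      LinearMap.ker ψ = V → (∀ y ∈ C, 0 ≤ ψ y) → (∀ y ∈ D, 0 ≤ ψ y) → False := by
    intro ψ eψ heψ hkψ hψC hψD
    have hmemV' : ∀ z : Fin (d+1) → ℝ, z ∈ V ↔ ψ z = 0 := by
      intro z; rw [← hkψ]; exact LinearMap.mem_ker
    have hc₀pos := intpos ψ eψ heψ C hψC c₀ hc₀
    have hd₀pos := intpos ψ eψ heψ D hψD d₀ hd₀
    have hψP₀ : ψ P₀ = 0 := (hmemV' P₀).1 hP₀V
    set K : ℝ := ψ c₀ / ψ d₀ with hKdef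
    have hKpos : 0 < K := div_pos hc₀pos hd₀pos
    set u : Fin (d+1) → ℝ := (c₀ - P₀) - K • (d₀ - P₀) with hudef
    have huV : u ∈ V := by
      rw [hmemV']
      simp only [hudef, map_sub, map_smul, smul_eq_mul, hψP₀, hKdef]
      field_simp; ring
    set t : ℝ := min (1/2) (min (1/(2*K)) (ε/(2*(‖u‖+1)))) with htdef
    have ht0 : 0 < t := by
      apply lt_min (by norm_num) (lt_min (by positivity) (by positivity))
    have ht12 : t ≤ 1/2 := min_le_left _ _
    have htK : t ≤ 1/(2*K) := le_trans (min_le_right _ _) (min_le_left _ _)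
    have htu : t ≤ ε/(2*(‖u‖+1)) := le_trans (min_le_right _ _) (min_le_right _ _)
    have ht1 : t < 1 := by linarith
    have h1t : (0:ℝ) < 1 - t := by linarith
    set s : ℝ := t * K with hsdef
    have hs0 : 0 < s := mul_pos ht0 hKpos
    have hs1 : s ≤ 1/2 := by
      rw [hsdef]
      have h6 : t * K ≤ (1/(2*K)) * K := mul_le_mul_of_nonneg_right htK hKpos.le
      have h7 : (1/(2*K)) * K = 1/2 := by rw [div_mul_eq_mul_div, one_mul, mul_comm, ← div_div, div_self hKpos.ne']
      linarith
    set p₁ : Fin (d+1) → ℝ := P₀ - (t/(1-t)) • u with hp₁def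
    have hp₁V : p₁ ∈ V := V.sub_mem hP₀V (V.smul_mem _ huV)
    have hp₁F : p₁ ∈ C ∩ D := by
      apply hballF _ hp₁V
      rw [hp₁def, dist_eq_norm, sub_sub_cancel_left, norm_neg, norm_smul, Real.norm_eq_abs,
        abs_of_pos (div_pos ht0 h1t)]
      have h1 : t/(1-t) ≤ 2*t := by
        rw [div_le_iff₀ h1t]; nlinarith
      have h2 : t/(1-t) * ‖u‖ ≤ 2*t*‖u‖ := by
        apply mul_le_mul_of_nonneg_right h1 (norm_nonneg _)
      have h3 : 2*t*‖u‖ < ε := by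
        have h4 : 2*t ≤ ε/(‖u‖+1) := by
          have h5 : ε/(2*(‖u‖+1)) * 2 = ε/(‖u‖+1) := by
            field_simp
          linarith
        have h4' : 2*t*(‖u‖+1) ≤ ε := (le_div_iff₀ (by positivity : (0:ℝ) < ‖u‖+1)).1 h4
        nlinarith [norm_nonneg u, ht0]
      linarith
    have hr1 : t • c₀ + (1-t) • p₁ ∈ interior C :=
      hCconv.combo_interior_self_mem_interior hc₀ hp₁F.1 ht0 (by linarith) (by ring)
    have hreq : t • c₀ + (1-t) • p₁ = s • d₀ + (1-s) • P₀ := by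
      rw [hp₁def, hudef, hsdef]
      match_scalars <;> (field_simp; try ring)
    have hr2 : s • d₀ + (1-s) • P₀ ∈ interior D :=
      hDconv.combo_interior_self_mem_interior hd₀ hp'F.2 hs0 (by linarith) (by ring)
    have hrint : s • d₀ + (1-s) • P₀ ∈ interior (C ∩ D) := by
      rw [interior_inter]; exact ⟨hreq ▸ hr1, hr2⟩
    rw [mem_interior_iff_mem_nhds, Metric.mem_nhds_iff] at hrint
    obtain ⟨ρ, hρ, hballr⟩ := hrint
    have heψn : 0 < ‖eψ‖ := by
      rw [norm_pos_iff]
      rintro rfl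
      rw [map_zero] at heψ
      exact one_ne_zero heψ.symm
    set r : Fin (d+1) → ℝ := s • d₀ + (1-s) • P₀ with hrdef
    have hrV : r ∈ V := hFV (hballr (Metric.mem_ball_self hρ))
    set a : ℝ := ρ/(2*‖eψ‖+1) with hadef
    have ha0 : 0 < a := by positivity
    have heball : r + a • eψ ∈ C ∩ D := by
      apply hballr
      rw [Metric.mem_ball, dist_eq_norm, add_sub_cancel_left, norm_smul, Real.norm_eq_abs,
        abs_of_pos ha0, hadef]
      rw [div_mul_eq_mul_div, div_lt_iff₀ (by positivity)]
      nlinarith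
    have heV : eψ ∈ V := by
      have h5 : a • eψ ∈ V := by
        have := V.sub_mem (hFV heball) hrV
        rwa [add_sub_cancel_left] at this
      have h6 := V.smul_mem a⁻¹ h5
      rwa [smul_smul, inv_mul_cancel₀ (ne_of_gt ha0), one_smul] at h6
    rw [hmemV' eψ] at heV
    rw [heV] at heψ
    exact one_ne_zero heψ.symm
  obtain ⟨ψ, eψ, hψe, hψker, hψC, hψD⟩ :
      ∃ (ψ : (Fin (d+1) → ℝ) →ₗ[ℝ] ℝ) (eψ : Fin (d+1) → ℝ), ψ eψ = 1 ∧
        LinearMap.ker ψ = V ∧ (∀ y ∈ C, 0 ≤ ψ y) ∧ (∀ y ∈ D, ψ y ≤ 0) := by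
    have hkerneg : LinearMap.ker (-φ) = V := by
      rw [← hkerV]; ext z; simp [LinearMap.mem_ker]
    have hnege : (-φ) (-e) = 1 := by simp [hφe]
    rcases oneside C hCconv hfaceC with hC | hC
    · rcases oneside D hDconv hfaceD with hD | hD
      · exact absurd (nosame φ e hφe hkerV hC hD) (fun h => h)
      · exact ⟨φ, e, hφe, hkerV, hC, hD⟩
    · rcases oneside D hDconv hfaceD with hD | hD
      · exact ⟨-φ, -e, hnege, hkerneg, fun y hy => by simpa using hC y hy, fun y hy => by
          simpa using hD y hy⟩
      · exact absurd (nosame (-φ) (-e) hnege hkerneg (fun y hy => by simpa using hC y hy)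
          (fun y hy => by simpa using hD y hy)) (fun h => h)
  have hmemVψ : ∀ z : Fin (d+1) → ℝ, z ∈ V ↔ ψ z = 0 := by
    intro z; rw [← hψker]; exact LinearMap.mem_ker
  constructor
  · -- forward direction
    intro hU x hx
    obtain ⟨x', hx'fr, rfl⟩ := hx
    have hxF : (x' : Fin (d+1) → ℝ) ∈ C ∩ D := by
      have h1 : x' ∈ closure ((Subtype.val) ⁻¹' (C ∩ D) : Set (affineSpan ℝ (C ∩ D))) :=
        frontier_subset_closure hx'fr
      rwa [IsClosed.closure_eq (hFcl.preimage continuous_subtype_val)] at h1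
    have hxint : (x' : Fin (d+1) → ℝ) ∉ interior (C ∪ D) := by
      intro hmem
      rw [mem_interior_iff_mem_nhds, Metric.mem_nhds_iff] at hmem
      obtain ⟨ρ, hρ, hballU⟩ := hmem
      have h2 : x' ∈ closure (((Subtype.val) ⁻¹' (C ∩ D) : Set (affineSpan ℝ (C ∩ D)))ᶜ) := by
        rw [frontier_eq_closure_inter_closure] at hx'fr; exact hx'fr.2
      rw [Metric.mem_closure_iff] at h2
      obtain ⟨v', hv', hvd⟩ := h2 ρ hρ
      have hvV : (v' : Fin (d+1) → ℝ) ∈ V := by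
        have h3 : (v' : Fin (d+1) → ℝ) ∈ (affineSpan ℝ (C ∩ D) : Set (Fin (d+1) → ℝ)) := v'.2
        rwa [hAV] at h3
      have hvU : (v' : Fin (d+1) → ℝ) ∈ C ∪ D := by
        apply hballU
        rw [Metric.mem_ball, ← Subtype.dist_eq, dist_comm]
        exact hvd
      rcases hvU with h | h
      · exact hv' (memF C hfaceC _ h hvV)
      · exact hv' (memF D hfaceD _ h hvV)
    have hUconv : Convex ℝ (C ∪ D) := hU
    obtain ⟨f, hf⟩ := geometric_hahn_banach_open_point hUconv.interior isOpen_interior hxint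
    have hc₀U : c₀ ∈ interior (C ∪ D) := interior_mono Set.subset_union_left hc₀
    have hle : ∀ y ∈ C ∪ D, f y ≤ f ↑x' := by
      intro y hy
      have hcont : Continuous fun t : ℝ => f (y + t • (c₀ - y)) :=
        f.continuous.comp (continuous_const.add (continuous_id.smul continuous_const))
      have htend : Filter.Tendsto (fun t : ℝ => f (y + t • (c₀ - y))) (𝓝[>] 0) (𝓝 (f y)) := by
        have h4 : Filter.Tendsto (fun t : ℝ => f (y + t • (c₀ - y))) (𝓝[>] 0)
            (𝓝 (f (y + (0:ℝ) • (c₀ - y)))) :=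
          (hcont.tendsto 0).mono_left nhdsWithin_le_nhds
        simpa using h4
      refine le_of_tendsto htend ?_
      filter_upwards [Ioc_mem_nhdsGT zero_lt_one] with t ht
      exact (hf _ (hUconv.add_smul_sub_mem_interior hy hc₀U ht)).le
    have hfx0 : f ↑x' = 0 := by
      have h5 : (0:ℝ) ≤ f ↑x' := by
        have := hle 0 (Or.inl h0C)
        rwa [map_zero] at this
      have h6 : f ((2:ℝ) • (x' : Fin (d+1) → ℝ)) ≤ f ↑x' :=
        hle _ (Or.inl (hCcone _ hxF.1 2 two_pos))
      rw [map_smul, smul_eq_mul] at h6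
      linarith
    refine ⟨-(f : (Fin (d+1) → ℝ) →ₗ[ℝ] ℝ), ?_, ?_, ?_⟩
    · intro h0
      have h7 := LinearMap.ext_iff.1 h0 c₀
      simp only [LinearMap.neg_apply, ContinuousLinearMap.coe_coe, LinearMap.zero_apply,
        neg_eq_zero] at h7
      have h8 := hf c₀ hc₀U
      rw [hfx0, h7] at h8
      exact lt_irrefl 0 h8
    · simp only [LinearMap.neg_apply, ContinuousLinearMap.coe_coe, hfx0, neg_zero]
    · intro y hy
      have h9 := hle y hy
      rw [hfx0] at h9
      simp only [LinearMap.neg_apply, ContinuousLinearMap.coe_coe]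
      linarith
  · -- backward direction
    intro hsupp
    have claim : ∀ a ∈ C, ∀ b ∈ D, ∀ ta tb : ℝ, 0 ≤ ta → 0 ≤ tb → ta + tb = 1 →
        ta • a + tb • b ∈ C ∪ D := by
      intro a haC b hbD ta tb hta htb hsum
      have htb' : tb = 1 - ta := by linarith
      subst htb'
      have hta1 : ta ≤ 1 := by linarith
      by_cases hb0 : ψ b = 0
      · have hbF : b ∈ C ∩ D := memF D hfaceD b hbD ((hmemVψ b).2 hb0)
        exact Or.inl (hCconv haC hbF.1 hta (by linarith) (by ring))
      by_cases ha0 : ψ a = 0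
      · have haF : a ∈ C ∩ D := memF C hfaceC a haC ((hmemVψ a).2 ha0)
        exact Or.inr (hDconv haF.2 hbD hta (by linarith) (by ring))
      have haP : 0 < ψ a := (hψC a haC).lt_of_ne (Ne.symm ha0)
      have hbN : ψ b < 0 := (hψD b hbD).lt_of_ne hb0
      have hΔ : 0 < ψ a - ψ b := by linarith
      set lam : ℝ := -ψ b / (ψ a - ψ b) with hlamdef
      have hlam0 : 0 < lam := div_pos (by linarith) hΔ
      have hlam1 : lam < 1 := by
        rw [hlamdef, div_lt_one hΔ]; linarith
      set c : Fin (d+1) → ℝ := lam • a + (1-lam) • b with hcdef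
      have hcV : c ∈ V := by
        rw [hmemVψ]
        simp only [hcdef, map_add, map_smul, smul_eq_mul]
        rw [hlamdef]
        field_simp
        ring
      have hcF : c ∈ C ∩ D := by
        by_contra hcF
        set S : Set ℝ := {t : ℝ | t ∈ Set.Icc (0:ℝ) 1 ∧ (1-t) • P₀ + t • c ∈ C ∩ D} with hSdef
        have hS0 : (0:ℝ) ∈ S := ⟨⟨le_refl 0, zero_le_one⟩, by simpa using hp'F⟩
        have hSbdd : BddAbove S := ⟨1, fun t ht => ht.1.2⟩
        have hScl : IsClosed S := by
          have hform : S = Set.Icc (0:ℝ) 1 ∩ (fun t : ℝ => (1-t) • P₀ + t • c) ⁻¹' (C ∩ D) := rfl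
          rw [hform]
          exact isClosed_Icc.inter (hFcl.preimage (((continuous_const.sub continuous_id).smul
            continuous_const).add (continuous_id.smul continuous_const)))
        set t₁ : ℝ := sSup S with ht₁def
        have ht₁S : t₁ ∈ S := hScl.csSup_mem ⟨0, hS0⟩ hSbdd
        have hxF : (1-t₁) • P₀ + t₁ • c ∈ C ∩ D := ht₁S.2
        have ht₁1 : t₁ < 1 := by
          rcases lt_or_eq_of_le ht₁S.1.2 with h | h
          · exact h
          · exfalso
            apply hcF
            have h1 := hxF
            rw [h] at h1
            simpa using h1
        set t' : ℝ := min 1 (ε/(2*(‖c - P₀‖+1))) with ht'def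
        have ht'0 : 0 < t' := lt_min one_pos (by positivity)
        have ht'1 : t' ≤ 1 := min_le_left _ _
        have ht'S : t' ∈ S := by
          refine ⟨⟨ht'0.le, ht'1⟩, ?_⟩
          apply hballF _ (V.add_mem (V.smul_mem _ hP₀V) (V.smul_mem _ hcV))
          have heq : (1-t') • P₀ + t' • c - P₀ = t' • (c - P₀) := by module
          rw [dist_eq_norm, heq, norm_smul, Real.norm_eq_abs, abs_of_pos ht'0]
          have h1 : t' ≤ ε/(2*(‖c - P₀‖+1)) := min_le_right _ _
          have h2 : (0:ℝ) ≤ ‖c - P₀‖ := norm_nonneg _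
          have h3 : t' * ‖c - P₀‖ ≤ ε/(2*(‖c - P₀‖+1)) * ‖c - P₀‖ :=
            mul_le_mul_of_nonneg_right h1 h2
          have h4 : ε/(2*(‖c - P₀‖+1)) * ‖c - P₀‖ < ε := by
            rw [div_mul_eq_mul_div, div_lt_iff₀ (by positivity)]
            nlinarith
          linarith
        have ht₁0 : 0 < t₁ := lt_of_lt_of_le ht'0 (le_csSup hSbdd ht'S)
        have hnotF : ∀ t : ℝ, t₁ < t → t ≤ 1 → (1-t) • P₀ + t • c ∉ C ∩ D := by
          intro t h1 h2 hmem
          have h3 : t ∈ S := ⟨⟨le_trans ht₁0.le h1.le, h2⟩, hmem⟩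
          exact absurd (le_csSup hSbdd h3) (not_le.2 h1)
        set x : Fin (d+1) → ℝ := (1-t₁) • P₀ + t₁ • c with hxdef
        have hxV : x ∈ V := V.add_mem (V.smul_mem _ hP₀V) (V.smul_mem _ hcV)
        have hxA : x ∈ affineSpan ℝ (C ∩ D) := by
          have h5 : x ∈ (affineSpan ℝ (C ∩ D) : Set (Fin (d+1) → ℝ)) := by rw [hAV]; exact hxV
          exact h5
        have hxfr : x ∈ intrinsicFrontier ℝ (C ∩ D) := by
          refine ⟨⟨x, hxA⟩, ?_, rfl⟩
          rw [frontier_eq_closure_inter_closure]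
          constructor
          · exact subset_closure hxF
          · rw [Metric.mem_closure_iff]
            intro δ hδ
            set t₂ : ℝ := min 1 (t₁ + δ/(2*(‖c - P₀‖+1))) with ht₂def
            have ht₂ : t₁ < t₂ := lt_min ht₁1 (lt_add_of_pos_right t₁ (by positivity))
            have ht₂1 : t₂ ≤ 1 := min_le_left _ _
            have hwnF : (1-t₂) • P₀ + t₂ • c ∉ C ∩ D := hnotF t₂ ht₂ ht₂1
            have hwV : (1-t₂) • P₀ + t₂ • c ∈ V :=
              V.add_mem (V.smul_mem _ hP₀V) (V.smul_mem _ hcV)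
            have hwA : (1-t₂) • P₀ + t₂ • c ∈ affineSpan ℝ (C ∩ D) := by
              have h5 : (1-t₂) • P₀ + t₂ • c ∈ (affineSpan ℝ (C ∩ D) : Set (Fin (d+1) → ℝ)) := by
                rw [hAV]; exact hwV
              exact h5
            refine ⟨⟨_, hwA⟩, hwnF, ?_⟩
            rw [Subtype.dist_eq]
            have heq2 : x - ((1-t₂) • P₀ + t₂ • c) = (t₂ - t₁) • (P₀ - c) := by
              rw [hxdef]; module
            rw [dist_eq_norm, heq2, norm_smul, Real.norm_eq_abs,
              abs_of_pos (by linarith : (0:ℝ) < t₂ - t₁), norm_sub_rev]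
            have h6 : t₂ - t₁ ≤ δ/(2*(‖c - P₀‖+1)) := by
              have h7 : t₂ ≤ t₁ + δ/(2*(‖c - P₀‖+1)) := min_le_right _ _
              linarith
            have h8 : (t₂ - t₁) * ‖c - P₀‖ ≤ δ/(2*(‖c - P₀‖+1)) * ‖c - P₀‖ :=
              mul_le_mul_of_nonneg_right h6 (norm_nonneg _)
            have h9 : δ/(2*(‖c - P₀‖+1)) * ‖c - P₀‖ < δ := by
              rw [div_mul_eq_mul_div, div_lt_iff₀ (by positivity)]
              nlinarith [norm_nonneg (c - P₀)]
            linarith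
        obtain ⟨f, hfne, hfx, hfU⟩ := hsupp x hxfr
        have hfa : 0 ≤ f a := hfU a (Or.inl haC)
        have hfb : 0 ≤ f b := hfU b (Or.inr hbD)
        have hfP₀ : 0 ≤ f P₀ := hfU P₀ (Or.inl hp'F.1)
        have hfceq : f c = lam * f a + (1-lam) * f b := by
          simp [hcdef, map_add, map_smul, smul_eq_mul]
        have hfc : 0 ≤ f c := by
          rw [hfceq]
          have h10 := mul_nonneg hlam0.le hfa
          have h11 := mul_nonneg (by linarith : (0:ℝ) ≤ 1-lam) hfb
          linarith
        have hfxeq : f x = (1-t₁) * f P₀ + t₁ * f c := by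
          simp [hxdef, map_add, map_smul, smul_eq_mul]
        have h0 : (1-t₁) * f P₀ + t₁ * f c = 0 := by rw [← hfxeq]; exact hfx
        have hfP₀0 : f P₀ = 0 := by
          have hA : 0 ≤ t₁ * f c := mul_nonneg ht₁0.le hfc
          have hB : (1-t₁) * f P₀ ≤ (1-t₁) * 0 := by rw [mul_zero]; linarith
          exact le_antisymm (le_of_mul_le_mul_left hB (by linarith)) hfP₀
        have hfc0 : f c = 0 := by
          have hA : 0 ≤ (1-t₁) * f P₀ := mul_nonneg (by linarith) hfP₀
          have hB : t₁ * f c ≤ t₁ * 0 := by rw [mul_zero]; linarith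
          exact le_antisymm (le_of_mul_le_mul_left hB ht₁0) hfc
        have hfa0 : f a = 0 := by
          have hA : 0 ≤ (1-lam) * f b := mul_nonneg (by linarith) hfb
          have hB : lam * f a ≤ lam * 0 := by
            rw [mul_zero]
            rw [hfceq] at hfc0
            linarith
          exact le_antisymm (le_of_mul_le_mul_left hB hlam0) hfa
        have hfV : ∀ v, v ∈ V → f v = 0 := by
          intro v hv
          set δv : ℝ := ε/(2*(‖v‖+1)) with hδvdef
          have hδv0 : 0 < δv := by positivity
          have hd1 : δv * ‖v‖ < ε := by
            have h11 : δv * (‖v‖+1) = ε/2 := by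
              rw [hδvdef]; field_simp
            nlinarith [norm_nonneg v]
          have hmem1 : P₀ + δv • v ∈ C ∩ D := by
            apply hballF _ (V.add_mem hP₀V (V.smul_mem _ hv))
            rw [dist_eq_norm, add_sub_cancel_left, norm_smul, Real.norm_eq_abs, abs_of_pos hδv0]
            exact hd1
          have hmem2 : P₀ + δv • (-v) ∈ C ∩ D := by
            apply hballF _ (V.add_mem hP₀V (V.smul_mem _ (V.neg_mem hv)))
            rw [dist_eq_norm, add_sub_cancel_left, norm_smul, Real.norm_eq_abs, abs_of_pos hδv0,
              norm_neg]
            exact hd1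
          have h13 := hfU _ (Or.inl hmem1.1)
          have h14 := hfU _ (Or.inl hmem2.1)
          rw [map_add, map_smul, smul_eq_mul, hfP₀0] at h13 h14
          rw [map_neg] at h14
          have h15 : δv * 0 ≤ δv * f v := by rw [mul_zero]; linarith
          have h16 : δv * 0 ≤ δv * (- f v) := by rw [mul_zero]; linarith
          have h17 := le_of_mul_le_mul_left h15 hδv0
          have h18 := le_of_mul_le_mul_left h16 hδv0
          linarith
        have hfψ : ∀ y : Fin (d+1) → ℝ, f y = ψ y * f eψ := by
          intro y
          have hv : y - (ψ y) • eψ ∈ V := by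
            rw [hmemVψ]
            simp [map_sub, map_smul, smul_eq_mul, hψe]
          have h15 := hfV _ hv
          rw [map_sub, map_smul, smul_eq_mul] at h15
          linarith
        have hfe0 : f eψ = 0 := by
          have h19 := hfψ a
          rw [hfa0] at h19
          rcases mul_eq_zero.1 h19.symm with h | h
          · exact absurd h ha0
          · exact h
        apply hfne
        apply LinearMap.ext
        intro y
        rw [hfψ y, hfe0, mul_zero]
        simp
      by_cases hta' : lam ≤ ta
      · have h1lam : (0:ℝ) < 1 - lam := by linarith
        set u : ℝ := (ta - lam)/(1-lam) with hudef
        have hu0 : 0 ≤ u := div_nonneg (by linarith) h1lam.le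
        have hu1 : u ≤ 1 := by rw [hudef, div_le_one h1lam]; linarith
        have heq : ta • a + (1-ta) • b = u • a + (1-u) • c := by
          rw [hcdef, hudef]
          match_scalars <;> (field_simp; try ring)
        rw [heq]
        exact Or.inl (hCconv haC hcF.1 hu0 (by linarith) (by ring))
      · push_neg at hta'
        set u : ℝ := ta/lam with hudef
        have hu0 : 0 ≤ u := div_nonneg hta hlam0.le
        have hu1 : u ≤ 1 := by
          rw [hudef, div_le_one hlam0]; linarith
        have heq : ta • a + (1-ta) • b = u • c + (1-u) • b := by
          rw [hcdef, hudef]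
          match_scalars <;> (field_simp; try ring)
        rw [heq]
        exact Or.inr (hDconv hcF.2 hbD hu0 (by linarith) (by ring))
    intro a' ha' b' hb' ta tb hta htb hsum
    rcases ha' with h1 | h1 <;> rcases hb' with h2 | h2
    · exact Or.inl (hCconv h1 h2 hta htb hsum)
    · exact claim _ h1 _ h2 ta tb hta htb hsum
    · have h3 := claim _ h2 _ h1 tb ta htb hta (by linarith)
      rwa [add_comm (tb • b') (ta • a')] at h3
    · exact Or.inr (hDconv h1 h2 hta htb hsum)
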